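/- Let t_0 < t_1 < ... < t_k ≤ T, and let x : [t_0, T] → ℝ^n be continuous and differentiable on each open interval (t_j, t_{j+1}) for j = 0,...,k−1 and on (t_k, T), with ẋ(t) = f(x(t)) + g(x(t_j)) + h(x(t_0)) on (t_j, t_{j+1}) and ẋ(t) = f(x(t)) + g(x(t_k)) + h(x(t_0)) on (t_k, T). Set L := L_f + L_g + L_h, and let L_W > 0 and 0 < β < α. Define ξ̄ := (1/(L_f + L_g)) log(1 + β(L_f + L_g)/(L(L_W L_h + β))) and ζ̄ := (1/L_f) log(1 + L_f(α − β)/(L_g(L L_W + α) + (α − β)(L_f + L_g))). Then for every t ∈ [t_k, T] with t − t_k ≤ ζ̄ and t − t_0 ≤ ξ̄: ‖x(t) − x(t_k)‖ ≤ ((α − β)/(L_W L_g)) ‖x(t) − x̄‖. -/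

import Mathlib

open Real Set Filter Topology

lemma my_exp_sub_one_le (x : ℝ) (hx : 0 ≤ x) : Real.exp x - 1 ≤ x * Real.exp x := by
  have h1 := Real.add_one_le_exp (-x)
  rw [Real.exp_neg] at h1
  have h2 := Real.exp_pos x
  have h3 : (1 - x) * Real.exp x ≤ 1 := by
    have h5 : 1 - x ≤ (Real.exp x)⁻¹ := by linarith
    calc (1 - x) * Real.exp x ≤ (Real.exp x)⁻¹ * Real.exp x :=
          mul_le_mul_of_nonneg_right h5 h2.le
      _ = 1 := inv_mul_cancel₀ h2.ne'
  nlinarith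

lemma my_key_exp (Lf Lg τ : ℝ) (hLf : 0 < Lf) (hLg : 0 < Lg) (hτ : 0 ≤ τ) :
    (Lf + Lg) * Real.exp (Lf * τ) - Lg ≤ Lf * Real.exp ((Lf + Lg) * τ) := by
  have h1 : Real.exp ((Lf + Lg) * τ) = Real.exp (Lf * τ) * Real.exp (Lg * τ) := by
    rw [← Real.exp_add]; ring_nf
  have h2 : Lg * τ + 1 ≤ Real.exp (Lg * τ) := Real.add_one_le_exp _
  have h3 : Real.exp (Lf * τ) - 1 ≤ (Lf * τ) * Real.exp (Lf * τ) :=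
    my_exp_sub_one_le _ (by positivity)
  have h4 := Real.exp_pos (Lf * τ)
  rw [h1]
  nlinarith [mul_le_mul_of_nonneg_left h3 hLg.le,
    mul_le_mul_of_nonneg_left (show Lg * τ ≤ Real.exp (Lg * τ) - 1 by linarith)
      (mul_nonneg hLf.le h4.le)]

lemma my_gb_le (Lf Lg D σ τ : ℝ) (hLf : 0 < Lf) (hLg : 0 < Lg) (hD : 0 ≤ D)
    (hσ : 0 ≤ σ) (hτ : 0 ≤ τ) :
    gronwallBound (D * (Real.exp ((Lf + Lg) * σ) - 1)) Lf
        (Lg * (D * (Real.exp ((Lf + Lg) * σ) - 1)) + (Lf + Lg) * D) τ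
      ≤ D * (Real.exp ((Lf + Lg) * (σ + τ)) - 1) := by
  rw [gronwallBound_of_K_ne_0 hLf.ne']
  have hk := my_key_exp Lf Lg τ hLf hLg hτ
  have hE1 : 1 ≤ Real.exp ((Lf + Lg) * σ) := Real.one_le_exp (by positivity)
  have e13 : Real.exp ((Lf + Lg) * (σ + τ))
      = Real.exp ((Lf + Lg) * σ) * Real.exp ((Lf + Lg) * τ) := by
    rw [← Real.exp_add]; ring_nf
  have h4 := Real.exp_pos (Lf * τ)
  have hE1' : (0:ℝ) ≤ Real.exp ((Lf + Lg) * σ) := by positivity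
  rw [e13, show (fun x =>
        D * (Real.exp ((Lf + Lg) * σ) - 1) * Real.exp (Lf * x) +
          (Lg * (D * (Real.exp ((Lf + Lg) * σ) - 1)) + (Lf + Lg) * D) / Lf * (Real.exp (Lf * x) - 1)) τ
      = D * (Real.exp ((Lf + Lg) * σ) - 1) * Real.exp (Lf * τ) +
          (Lg * (D * (Real.exp ((Lf + Lg) * σ) - 1)) + (Lf + Lg) * D) / Lf * (Real.exp (Lf * τ) - 1) from rfl,
    ← mul_le_mul_iff_right₀ hLf]
  have hint := mul_le_mul_of_nonneg_left hk (mul_nonneg hD hE1')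
  field_simp
  nlinarith [hint]

lemma my_gronwall_open {E : Type*} [NormedAddCommGroup E] [NormedSpace ℝ E]
    {y : ℝ → E} {y' : ℝ → E} {a b δ K ε : ℝ} (hK : K ≠ 0)
    (hc : ContinuousOn y (Set.Icc a b))
    (hd : ∀ s ∈ Set.Ioo a b, HasDerivAt y (y' s) s)
    (hδ : ‖y a‖ ≤ δ)
    (hbound : ∀ s ∈ Set.Ioo a b, ‖y' s‖ ≤ K * ‖y s‖ + ε) :
    ∀ s ∈ Set.Icc a b, ‖y s‖ ≤ gronwallBound δ K ε (s - a) := by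
  intro s hs
  rcases eq_or_lt_of_le hs.1 with heq | hlt
  · rw [← heq, sub_self, gronwallBound_x0]; exact hδ
  · -- a < s
    have hsb : s ≤ b := hs.2
    have h1 : ∀ a' ∈ Set.Ioo a s, ‖y s‖ ≤ gronwallBound (‖y a'‖) K ε (s - a') := by
      intro a' ha'
      refine norm_le_gronwallBound_of_norm_deriv_right_le (f' := y')
        (hc.mono (Set.Icc_subset_Icc ha'.1.le hsb)) ?_ le_rfl ?_ s
        ⟨ha'.2.le, le_rfl⟩
      · intro r hr
        exact (hd r ⟨lt_of_lt_of_le ha'.1 hr.1, lt_of_lt_of_le hr.2 hsb⟩).hasDerivWithinAt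
      · intro r hr
        exact hbound r ⟨lt_of_lt_of_le ha'.1 hr.1, lt_of_lt_of_le hr.2 hsb⟩
    have hne : (𝓝[Set.Ioo a s] a).NeBot := by
      apply mem_closure_iff_nhdsWithin_neBot.mp
      rw [closure_Ioo hlt.ne]
      exact ⟨le_rfl, hlt.le⟩
    have hty : Filter.Tendsto y (𝓝[Set.Ioo a s] a) (𝓝 (y a)) := by
      have := (hc a ⟨le_rfl, hlt.le.trans hsb⟩).tendsto
      exact this.mono_left (nhdsWithin_mono a (fun r hr => ⟨hr.1.le, hr.2.le.trans hsb⟩))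
    have htend : Filter.Tendsto (fun a' => gronwallBound (‖y a'‖) K ε (s - a'))
        (𝓝[Set.Ioo a s] a) (𝓝 (gronwallBound (‖y a‖) K ε (s - a))) := by
      simp only [gronwallBound_of_K_ne_0 hK]
      have hn : Filter.Tendsto (fun a' => ‖y a'‖) (𝓝[Set.Ioo a s] a) (𝓝 ‖y a‖) :=
        hty.norm
      have hx : Filter.Tendsto (fun a' : ℝ => s - a') (𝓝[Set.Ioo a s] a) (𝓝 (s - a)) :=
        (continuous_const.sub continuous_id).continuousAt.tendsto.mono_left
          nhdsWithin_le_nhds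
      have he : Filter.Tendsto (fun a' : ℝ => Real.exp (K * (s - a')))
          (𝓝[Set.Ioo a s] a) (𝓝 (Real.exp (K * (s - a)))) :=
        (Real.continuous_exp.tendsto _).comp (hx.const_mul K)
      exact (hn.mul he).add ((he.sub_const 1).const_mul (ε / K))
    have hle : ‖y s‖ ≤ gronwallBound (‖y a‖) K ε (s - a) := by
      refine ge_of_tendsto htend ?_
      filter_upwards [self_mem_nhdsWithin] with a' ha' using h1 a' ha'
    refine hle.trans ?_
    rw [gronwallBound_of_K_ne_0 hK, gronwallBound_of_K_ne_0 hK]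
    have : (0:ℝ) ≤ Real.exp (K * (s - a)) := (Real.exp_pos _).le
    nlinarith

/-- If the time since the last bid update satisfies `t − t_k ≤ ζ̄` and the
time since the last market clearing satisfies `t − t₀ ≤ ξ̄`, where
`ξ̄ = (1/(L_f+L_g)) log(1 + β(L_f+L_g)/(L(L_W L_h + β)))`,
`ζ̄ = (1/L_f) log(1 + L_f(α−β)/(L_g(L L_W + α) + (α−β)(L_f+L_g)))` and
`L = L_f + L_g + L_h`, then `‖x(t) − x(t_k)‖ ≤ ((α−β)/(L_W L_g)) ‖x(t) − x̄‖`
along the piecewise dynamics. -/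
theorem state_deviation_bound_inner_loop_zeta
    {n : ℕ} (f g h : EuclideanSpace ℝ (Fin n) → EuclideanSpace ℝ (Fin n))
    (Lf Lg Lh : ℝ) (hLf : 0 < Lf) (hLg : 0 < Lg) (hLh : 0 < Lh)
    (hf : ∀ a b, ‖f a - f b‖ ≤ Lf * ‖a - b‖)
    (hg : ∀ a b, ‖g a - g b‖ ≤ Lg * ‖a - b‖)
    (hh : ∀ a b, ‖h a - h b‖ ≤ Lh * ‖a - b‖)
    (xb : EuclideanSpace ℝ (Fin n)) (heq : f xb + g xb + h xb = 0)
    (k : ℕ) (t : ℕ → ℝ) (T : ℝ)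
    (hmono : ∀ j < k, t j < t (j + 1)) (hkT : t k ≤ T)
    (LW α β : ℝ) (hLW : 0 < LW) (hβ : 0 < β) (hβα : β < α)
    (x : ℝ → EuclideanSpace ℝ (Fin n))
    (hcont : ContinuousOn x (Set.Icc (t 0) T))
    (hode : ∀ j < k, ∀ s ∈ Set.Ioo (t j) (t (j + 1)),
      HasDerivAt x (f (x s) + g (x (t j)) + h (x (t 0))) s)
    (hodeLast : ∀ s ∈ Set.Ioo (t k) T,
      HasDerivAt x (f (x s) + g (x (t k)) + h (x (t 0))) s)
    (u : ℝ) (hu : u ∈ Set.Icc (t k) T)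
    (hζ : u - t k ≤ (1 / Lf)
        * Real.log (1 + Lf * (α - β)
            / (Lg * ((Lf + Lg + Lh) * LW + α) + (α - β) * (Lf + Lg))))
    (hξ : u - t 0 ≤ (1 / (Lf + Lg))
        * Real.log (1 + β * (Lf + Lg) / ((Lf + Lg + Lh) * (LW * Lh + β)))) :
    ‖x u - x (t k)‖ ≤ ((α - β) / (LW * Lg)) * ‖x u - xb‖ := by
  have hαβ : 0 < α - β := sub_pos.mpr hβα
  have hα : 0 < α := hβ.trans hβα
  have hL' : 0 < Lf + Lg := by linarith
  have hL : 0 < Lf + Lg + Lh := by linarith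
  have tmono : ∀ i j : ℕ, i ≤ j → j ≤ k → t i ≤ t j := by
    intro i j hij
    induction hij with
    | refl => intro _; exact le_rfl
    | @step m hm ih =>
      intro hk1
      exact le_trans (ih (by omega)) (hmono m (by omega)).le
  have ht0k : t 0 ≤ t k := tmono 0 k (Nat.zero_le k) le_rfl
  have htku : t k ≤ u := hu.1
  have huT : u ≤ T := hu.2
  have ht0u : t 0 ≤ u := ht0k.trans htku
  set C0 : ℝ := ‖f (x (t 0)) + g (x (t 0)) + h (x (t 0))‖ with hC0def
  set D : ℝ := C0 / (Lf + Lg) with hDdef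
  have hC0 : 0 ≤ C0 := norm_nonneg _
  have hD : 0 ≤ D := by positivity
  have hC0D : (Lf + Lg) * D = C0 := by rw [hDdef]; field_simp
  -- generic step along the piecewise dynamics
  have step : ∀ (a b : ℝ) (w : EuclideanSpace ℝ (Fin n)), t 0 ≤ a → a ≤ b → b ≤ T →
      (∀ s ∈ Set.Icc (t 0) a, ‖x s - x (t 0)‖ ≤ D * (Real.exp ((Lf + Lg) * (s - t 0)) - 1)) →
      (∀ s ∈ Set.Ioo a b, HasDerivAt x (f (x s) + g w + h (x (t 0))) s) →
      ‖w - x (t 0)‖ ≤ D * (Real.exp ((Lf + Lg) * (a - t 0)) - 1) →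
      ∀ s ∈ Set.Icc (t 0) b, ‖x s - x (t 0)‖ ≤ D * (Real.exp ((Lf + Lg) * (s - t 0)) - 1) := by
    intro a b w h0a hab hbT prev hder hw s hs
    by_cases hsa : s ≤ a
    · exact prev s ⟨hs.1, hsa⟩
    · push_neg at hsa
      have hsab : s ∈ Set.Icc a b := ⟨hsa.le, hs.2⟩
      have hgron := my_gronwall_open (y := fun r => x r - x (t 0))
        (y' := fun r => f (x r) + g w + h (x (t 0)))
        (a := a) (b := b)
        (δ := D * (Real.exp ((Lf + Lg) * (a - t 0)) - 1))
        (ε := Lg * (D * (Real.exp ((Lf + Lg) * (a - t 0)) - 1)) + (Lf + Lg) * D)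
        hLf.ne'
        (((hcont.mono (Set.Icc_subset_Icc h0a hbT)).sub continuousOn_const))
        (fun r hr => (hder r hr).sub_const _)
        (prev a ⟨h0a, le_rfl⟩)
        ?_ s hsab
      · refine hgron.trans ?_
        have := my_gb_le Lf Lg D (a - t 0) (s - a) hLf hLg hD (by linarith) (by linarith)
        rw [show a - t 0 + (s - a) = s - t 0 by ring] at this
        exact this
      · intro r hr
        show ‖f (x r) + g w + h (x (t 0))‖
          ≤ Lf * ‖x r - x (t 0)‖
            + (Lg * (D * (Real.exp ((Lf + Lg) * (a - t 0)) - 1)) + (Lf + Lg) * D)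
        have hid : f (x r) + g w + h (x (t 0))
            = (f (x r) - f (x (t 0))) + ((g w - g (x (t 0)))
              + (f (x (t 0)) + g (x (t 0)) + h (x (t 0)))) := by abel
        rw [hid]
        have h1 := norm_add_le (f (x r) - f (x (t 0)))
          ((g w - g (x (t 0))) + (f (x (t 0)) + g (x (t 0)) + h (x (t 0))))
        have h2 := norm_add_le (g w - g (x (t 0))) (f (x (t 0)) + g (x (t 0)) + h (x (t 0)))
        have h3 := hf (x r) (x (t 0))
        have h4 := hg w (x (t 0))
        have h5 : Lg * ‖w - x (t 0)‖ ≤ Lg * (D * (Real.exp ((Lf + Lg) * (a - t 0)) - 1)) :=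
          mul_le_mul_of_nonneg_left hw hLg.le
        have h6 : ‖f (x (t 0)) + g (x (t 0)) + h (x (t 0))‖ = (Lf + Lg) * D := by
          rw [hC0D, hC0def]
        linarith
  -- outer bound on [t 0, t k]
  have outer : ∀ j, j ≤ k → ∀ s ∈ Set.Icc (t 0) (t j),
      ‖x s - x (t 0)‖ ≤ D * (Real.exp ((Lf + Lg) * (s - t 0)) - 1) := by
    intro j
    induction j with
    | zero =>
      intro _ s hs
      have : s = t 0 := le_antisymm hs.2 hs.1
      rw [this]
      simp
    | succ m ih =>
      intro hmk s hs
      have hm : m < k := by omega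
      exact step (t m) (t (m + 1)) (x (t m)) (tmono 0 m (Nat.zero_le m) (by omega))
        (hmono m hm).le ((tmono (m + 1) k (by omega) le_rfl).trans hkT)
        (ih (by omega)) (hode m hm)
        (ih (by omega) (t m) ⟨tmono 0 m (Nat.zero_le m) (by omega), le_rfl⟩) s hs
  -- outer bound up to u
  have outerU : ∀ s ∈ Set.Icc (t 0) u,
      ‖x s - x (t 0)‖ ≤ D * (Real.exp ((Lf + Lg) * (s - t 0)) - 1) :=
    step (t k) u (x (t k)) ht0k htku huT (outer k le_rfl)
      (fun s hs => hodeLast s ⟨hs.1, lt_of_lt_of_le hs.2 huT⟩)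
      (outer k le_rfl (t k) ⟨ht0k, le_rfl⟩)
  -- bound C0 by the distance to equilibrium
  have hC0le : C0 ≤ (Lf + Lg + Lh) * ‖x (t 0) - xb‖ := by
    have hid : f (x (t 0)) + g (x (t 0)) + h (x (t 0))
        = (f (x (t 0)) - f xb) + ((g (x (t 0)) - g xb) + (h (x (t 0)) - h xb)) := by
      rw [← sub_eq_zero]
      have : (f (x (t 0)) + g (x (t 0)) + h (x (t 0)))
          - ((f (x (t 0)) - f xb) + ((g (x (t 0)) - g xb) + (h (x (t 0)) - h xb)))
          = f xb + g xb + h xb := by abel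
      rw [this, heq]
    rw [hC0def, hid]
    have h1 := norm_add_le (f (x (t 0)) - f xb) ((g (x (t 0)) - g xb) + (h (x (t 0)) - h xb))
    have h2 := norm_add_le (g (x (t 0)) - g xb) (h (x (t 0)) - h xb)
    have h3 := hf (x (t 0)) xb
    have h4 := hg (x (t 0)) xb
    have h5 := hh (x (t 0)) xb
    linarith
  -- exponential bound from hξ
  have hexpξ : Real.exp ((Lf + Lg) * (u - t 0)) - 1
      ≤ β * (Lf + Lg) / ((Lf + Lg + Lh) * (LW * Lh + β)) := by
    have hrpos : (0:ℝ) < 1 + β * (Lf + Lg) / ((Lf + Lg + Lh) * (LW * Lh + β)) := by positivity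
    have h1 : (Lf + Lg) * (u - t 0)
        ≤ Real.log (1 + β * (Lf + Lg) / ((Lf + Lg + Lh) * (LW * Lh + β))) := by
      have h2 := mul_le_mul_of_nonneg_left hξ hL'.le
      rw [show (Lf + Lg) * (1 / (Lf + Lg)
          * Real.log (1 + β * (Lf + Lg) / ((Lf + Lg + Lh) * (LW * Lh + β))))
          = Real.log (1 + β * (Lf + Lg) / ((Lf + Lg + Lh) * (LW * Lh + β))) from by
        field_simp] at h2
      exact h2
    have h3 := Real.exp_le_exp.mpr h1
    rw [Real.exp_log hrpos] at h3
    linarith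
  -- Q * (LW * Lh) ≤ β * M
  have hQ2 : ‖x u - x (t 0)‖ * ((Lf + Lg + Lh) * (LW * Lh + β)) ≤ C0 * β := by
    have hQB : ‖x u - x (t 0)‖ ≤ D * (Real.exp ((Lf + Lg) * (u - t 0)) - 1) :=
      outerU u ⟨ht0u, le_rfl⟩
    have h1 : D * (Real.exp ((Lf + Lg) * (u - t 0)) - 1)
        ≤ D * (β * (Lf + Lg) / ((Lf + Lg + Lh) * (LW * Lh + β))) :=
      mul_le_mul_of_nonneg_left hexpξ hD
    have h2 : D * (β * (Lf + Lg) / ((Lf + Lg + Lh) * (LW * Lh + β)))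
        = C0 * β / ((Lf + Lg + Lh) * (LW * Lh + β)) := by
      rw [hDdef]; field_simp
    have h3 : ‖x u - x (t 0)‖ ≤ C0 * β / ((Lf + Lg + Lh) * (LW * Lh + β)) := by
      rw [← h2]; exact hQB.trans h1
    rwa [le_div_iff₀ (by positivity)] at h3
  have hN0le : ‖x (t 0) - xb‖ ≤ ‖x u - xb‖ + ‖x u - x (t 0)‖ := by
    have hid : x (t 0) - xb = (x u - xb) - (x u - x (t 0)) := by abel
    rw [hid]; exact norm_sub_le _ _
  have hQLW : ‖x u - x (t 0)‖ * (LW * Lh) ≤ β * ‖x u - xb‖ := by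
    have h1 : C0 * β ≤ (Lf + Lg + Lh) * ‖x (t 0) - xb‖ * β :=
      mul_le_mul_of_nonneg_right hC0le hβ.le
    have h2 : (Lf + Lg + Lh) * ‖x (t 0) - xb‖ * β
        ≤ (Lf + Lg + Lh) * (‖x u - xb‖ + ‖x u - x (t 0)‖) * β :=
      mul_le_mul_of_nonneg_right (mul_le_mul_of_nonneg_left hN0le hL.le) hβ.le
    have h3 : ‖x u - x (t 0)‖ * ((Lf + Lg + Lh) * (LW * Lh + β))
        ≤ (Lf + Lg + Lh) * (‖x u - xb‖ + ‖x u - x (t 0)‖) * β := hQ2.trans (h1.trans h2)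
    have h4 : (Lf + Lg + Lh) * (‖x u - x (t 0)‖ * (LW * Lh))
        ≤ (Lf + Lg + Lh) * (β * ‖x u - xb‖) := by linarith [h3]
    exact le_of_mul_le_mul_left h4 hL
  have hN0LW : ‖x (t 0) - xb‖ * (LW * Lh)
      ≤ β * ‖x u - xb‖ + ‖x u - xb‖ * (LW * Lh) := by
    linarith [mul_le_mul_of_nonneg_right hN0le (by positivity : (0:ℝ) ≤ LW * Lh), hQLW]
  -- inner Gronwall on [t k, u]
  have hrwInner : ∀ s : ℝ, f (x s) + g (x (t k)) + h (x (t 0))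
      = (f (x s) - f (x (t k))) + (((f (x (t k)) - f xb) + (g (x (t k)) - g xb))
        + (h (x (t 0)) - h xb)) := by
    intro s
    rw [← sub_eq_zero]
    have : (f (x s) + g (x (t k)) + h (x (t 0)))
        - ((f (x s) - f (x (t k))) + (((f (x (t k)) - f xb) + (g (x (t k)) - g xb))
          + (h (x (t 0)) - h xb)))
        = f xb + g xb + h xb := by abel
    rw [this, heq]
  have hinner : ‖x u - x (t k)‖ ≤ gronwallBound 0 Lf
      ((Lf + Lg) * ‖x (t k) - xb‖ + Lh * ‖x (t 0) - xb‖) (u - t k) := by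
    refine my_gronwall_open (y := fun r => x r - x (t k))
      (y' := fun r => f (x r) + g (x (t k)) + h (x (t 0))) hLf.ne'
      ((hcont.mono (Set.Icc_subset_Icc ht0k huT)).sub continuousOn_const)
      (fun r hr => (hodeLast r ⟨hr.1, lt_of_lt_of_le hr.2 huT⟩).sub_const _)
      (by simp) ?_ u ⟨htku, le_rfl⟩
    intro r hr
    show ‖f (x r) + g (x (t k)) + h (x (t 0))‖
      ≤ Lf * ‖x r - x (t k)‖ + ((Lf + Lg) * ‖x (t k) - xb‖ + Lh * ‖x (t 0) - xb‖)
    rw [hrwInner r]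
    have h1 := norm_add_le (f (x r) - f (x (t k)))
      (((f (x (t k)) - f xb) + (g (x (t k)) - g xb)) + (h (x (t 0)) - h xb))
    have h2 := norm_add_le ((f (x (t k)) - f xb) + (g (x (t k)) - g xb)) (h (x (t 0)) - h xb)
    have h3 := norm_add_le (f (x (t k)) - f xb) (g (x (t k)) - g xb)
    have h4 := hf (x r) (x (t k))
    have h5 := hf (x (t k)) xb
    have h6 := hg (x (t k)) xb
    have h7 := hh (x (t 0)) xb
    linarith
  -- denominator positivity
  have hDen : 0 < Lg * ((Lf + Lg + Lh) * LW + α) + (α - β) * (Lf + Lg) :=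
    add_pos (by positivity) (mul_pos hαβ hL')
  -- exponential bound from hζ
  have hexpζ : Real.exp (Lf * (u - t k)) - 1
      ≤ Lf * (α - β) / (Lg * ((Lf + Lg + Lh) * LW + α) + (α - β) * (Lf + Lg)) := by
    have hnum : 0 < Lf * (α - β) := mul_pos hLf hαβ
    have hrpos : (0:ℝ) < 1 + Lf * (α - β)
        / (Lg * ((Lf + Lg + Lh) * LW + α) + (α - β) * (Lf + Lg)) := by
      have := div_pos hnum hDen; linarith
    have h1 : Lf * (u - t k)
        ≤ Real.log (1 + Lf * (α - β)
          / (Lg * ((Lf + Lg + Lh) * LW + α) + (α - β) * (Lf + Lg))) := by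
      have h2 := mul_le_mul_of_nonneg_left hζ hLf.le
      rw [show Lf * (1 / Lf * Real.log (1 + Lf * (α - β)
          / (Lg * ((Lf + Lg + Lh) * LW + α) + (α - β) * (Lf + Lg))))
          = Real.log (1 + Lf * (α - β)
          / (Lg * ((Lf + Lg + Lh) * LW + α) + (α - β) * (Lf + Lg))) from by
        field_simp] at h2
      exact h2
    have h3 := Real.exp_le_exp.mpr h1
    rw [Real.exp_log hrpos] at h3
    linarith
  have hPle : ‖x u - x (t k)‖ * (Lg * ((Lf + Lg + Lh) * LW + α) + (α - β) * (Lf + Lg))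
      ≤ (α - β) * ((Lf + Lg) * ‖x (t k) - xb‖ + Lh * ‖x (t 0) - xb‖) := by
    have hC1 : (0:ℝ) ≤ (Lf + Lg) * ‖x (t k) - xb‖ + Lh * ‖x (t 0) - xb‖ := by positivity
    have h1 : ‖x u - x (t k)‖ ≤ ((Lf + Lg) * ‖x (t k) - xb‖ + Lh * ‖x (t 0) - xb‖) / Lf
        * (Real.exp (Lf * (u - t k)) - 1) := by
      rw [gronwallBound_of_K_ne_0 hLf.ne'] at hinner
      simpa using hinner
    have h3 : ‖x u - x (t k)‖ ≤ ((Lf + Lg) * ‖x (t k) - xb‖ + Lh * ‖x (t 0) - xb‖) / Lf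
        * (Lf * (α - β) / (Lg * ((Lf + Lg + Lh) * LW + α) + (α - β) * (Lf + Lg))) :=
      h1.trans (mul_le_mul_of_nonneg_left hexpζ (by positivity))
    have h4 : ((Lf + Lg) * ‖x (t k) - xb‖ + Lh * ‖x (t 0) - xb‖) / Lf
        * (Lf * (α - β) / (Lg * ((Lf + Lg + Lh) * LW + α) + (α - β) * (Lf + Lg)))
        = ((α - β) * ((Lf + Lg) * ‖x (t k) - xb‖ + Lh * ‖x (t 0) - xb‖))
          / (Lg * ((Lf + Lg + Lh) * LW + α) + (α - β) * (Lf + Lg)) := by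
      field_simp
    rw [h4] at h3
    rwa [le_div_iff₀ hDen] at h3
  have hNkle : ‖x (t k) - xb‖ ≤ ‖x u - xb‖ + ‖x u - x (t k)‖ := by
    have hid : x (t k) - xb = (x u - xb) - (x u - x (t k)) := by abel
    rw [hid]; exact norm_sub_le _ _
  -- final arithmetic
  rw [div_mul_eq_mul_div, le_div_iff₀ (by positivity : (0:ℝ) < LW * Lg)]
  have h5' : ‖x u - x (t k)‖ * (Lg * ((Lf + Lg + Lh) * LW + α))
      ≤ (α - β) * ((Lf + Lg) * ‖x u - xb‖ + Lh * ‖x (t 0) - xb‖) := by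
    linarith [hPle, mul_le_mul_of_nonneg_left hNkle
      (by positivity : (0:ℝ) ≤ (α - β) * (Lf + Lg))]
  have hLLWα : (0:ℝ) < (Lf + Lg + Lh) * LW + α := by positivity
  have h6 : ‖x u - x (t k)‖ * (LW * Lg) * ((Lf + Lg + Lh) * LW + α)
      ≤ (α - β) * ‖x u - xb‖ * ((Lf + Lg + Lh) * LW + α) := by
    linarith [mul_le_mul_of_nonneg_right h5' hLW.le,
      mul_le_mul_of_nonneg_left hN0LW hαβ.le,
      mul_le_mul_of_nonneg_left hβα.le (mul_nonneg hαβ.le (norm_nonneg (x u - xb)))]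
  exact le_of_mul_le_mul_right h6 hLLWα
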